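/- arXiv:1305.3087 — 2 statements merged into one kernel-verified Lean document; each statement's English description precedes it below -/
import Mathlib

section
/- For t ∈ ℝ and a ∈ {0,1}, |Γ((1/2 + it + a)/2)| · e^{πt/4} ≤ max( 2^{1/4} √π (3/2 + max(t,0))^{1/4} exp(1/6), √(2π) exp(π/8 + 1/4) ). -/
namespace GB
open Real Filter Finset Set Topology
noncomputable section

/-- integrand `log(1+y²/u²)` written without division -/
def f (y u : ℝ) : ℝ := Real.log (u ^ 2 + y ^ 2) - 2 * Real.log u

/-- antiderivative of `f y` -/
def F (y u : ℝ) : ℝ :=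
  u * (Real.log (u ^ 2 + y ^ 2) - 2 * Real.log u) + 2 * y * Real.arctan (u / y)

lemma f_nonneg {y u : ℝ} (hu : 0 < u) : 0 ≤ f y u := by
  have h1 : Real.log (u ^ 2) ≤ Real.log (u ^ 2 + y ^ 2) :=
    Real.log_le_log (by positivity) (by nlinarith [sq_nonneg y])
  have h2 : Real.log (u ^ 2) = 2 * Real.log u := by
    rw [Real.log_pow]; push_cast; ring
  unfold f; linarith [h1, h2 ▸ h1]

lemma f_hasDeriv {y u : ℝ} (hy : 0 < y) (hu : 0 < u) :
    HasDerivAt (f y) (2 * u / (u ^ 2 + y ^ 2) - 2 / u) u := by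
  have hne : u ^ 2 + y ^ 2 ≠ 0 := by positivity
  have h1 : HasDerivAt (fun u : ℝ => u ^ 2 + y ^ 2) (2 * u) u := by
    simpa using (hasDerivAt_pow 2 u).add_const (y ^ 2)
  have h2 : HasDerivAt (fun u : ℝ => Real.log (u ^ 2 + y ^ 2)) (2 * u / (u ^ 2 + y ^ 2)) u :=
    h1.log hne
  have h3 : HasDerivAt (fun u : ℝ => 2 * Real.log u) (2 / u) u := by
    simpa [div_eq_mul_inv, mul_comm] using (Real.hasDerivAt_log hu.ne').const_mul 2
  exact h2.sub h3

lemma F_hasDeriv {y u : ℝ} (hy : 0 < y) (hu : 0 < u) :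
    HasDerivAt (F y) (f y u) u := by
  have hne : u ^ 2 + y ^ 2 ≠ 0 := by positivity
  have h1 : HasDerivAt (fun u : ℝ => u * (Real.log (u ^ 2 + y ^ 2) - 2 * Real.log u))
      (1 * (Real.log (u ^ 2 + y ^ 2) - 2 * Real.log u) +
        u * (2 * u / (u ^ 2 + y ^ 2) - 2 / u)) u :=
    (hasDerivAt_id u).mul (f_hasDeriv hy hu)
  have h2 : HasDerivAt (fun u : ℝ => Real.arctan (u / y)) ((1 / (1 + (u / y) ^ 2)) * (1 / y)) u :=
    by have := (Real.hasDerivAt_arctan (u / y)).comp u ((hasDerivAt_id' u).div_const y); exact this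
  have h3 := h1.add (h2.const_mul (2 * y))
  refine h3.congr_deriv ?_
  unfold f
  field_simp
  ring

lemma g_hasDeriv {y u : ℝ} (hy : 0 < y) (hu : 0 < u) :
    HasDerivAt (fun u : ℝ => 2 * u / (u ^ 2 + y ^ 2) - 2 / u)
      ((2 * (u ^ 2 + y ^ 2) - 2 * u * (2 * u)) / (u ^ 2 + y ^ 2) ^ 2 + 2 / u ^ 2) u := by
  have hne : u ^ 2 + y ^ 2 ≠ 0 := by positivity
  have h1 : HasDerivAt (fun u : ℝ => 2 * u) 2 u := by
    simpa using (hasDerivAt_id u).const_mul 2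
  have h2 : HasDerivAt (fun u : ℝ => u ^ 2 + y ^ 2) (2 * u) u := by
    simpa using (hasDerivAt_pow 2 u).add_const (y ^ 2)
  have h3 := h1.div h2 hne
  have h4 : HasDerivAt (fun u : ℝ => 2 / u) (-(2 / u ^ 2)) u := by
    have := (hasDerivAt_inv hu.ne').const_mul 2
    simpa [div_eq_mul_inv] using this
  refine (h3.sub h4).congr_deriv ?_
  ring

lemma f_convexOn {y : ℝ} (hy : 0 < y) : ConvexOn ℝ (Ioi (0:ℝ)) (f y) := by
  have hderiv : ∀ u ∈ Ioi (0:ℝ), deriv (f y) u = 2 * u / (u ^ 2 + y ^ 2) - 2 / u :=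
    fun u hu => (f_hasDeriv hy hu).deriv
  refine convexOn_of_deriv2_nonneg (convex_Ioi 0)
    (fun u hu => (f_hasDeriv hy hu).continuousAt.continuousWithinAt)
    (fun u hu => ?_) (fun u hu => ?_) (fun u hu => ?_)
  · rw [interior_Ioi] at hu
    exact (f_hasDeriv hy hu).differentiableAt.differentiableWithinAt
  · rw [interior_Ioi] at hu
    have : deriv (f y) =ᶠ[nhds u] fun u => 2 * u / (u ^ 2 + y ^ 2) - 2 / u :=
      Filter.eventuallyEq_of_mem (isOpen_Ioi.mem_nhds hu) hderiv
    exact ((this.differentiableAt_iff).2 (g_hasDeriv hy hu).differentiableAt).differentiableWithinAt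
  · rw [interior_Ioi] at hu
    have heq : deriv (f y) =ᶠ[nhds u] fun u => 2 * u / (u ^ 2 + y ^ 2) - 2 / u :=
      Filter.eventuallyEq_of_mem (isOpen_Ioi.mem_nhds hu) hderiv
    have : deriv^[2] (f y) u = deriv (deriv (f y)) u := by
      simp [Function.iterate_succ, Function.iterate_zero]
    rw [this, heq.deriv_eq, (g_hasDeriv hy hu).deriv]
    have hu' : (0:ℝ) < u := hu
    have h1 : (0:ℝ) < u ^ 2 + y ^ 2 := by positivity
    rw [div_add_div _ _ (by positivity) (by positivity : (u:ℝ)^2 ≠ 0), le_div_iff₀ (by positivity)]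
    nlinarith [sq_nonneg (u^2 - y^2), sq_nonneg u, sq_nonneg y, sq_nonneg (u*y)]

lemma f_contOn {y : ℝ} (hy : 0 < y) {s : Set ℝ} (hs : s ⊆ Ioi 0) : ContinuousOn (f y) s :=
  fun u hu => ((f_hasDeriv hy (hs hu)).continuousAt).continuousWithinAt

lemma trapezoid {y a : ℝ} (hy : 0 < y) (ha : 0 < a) :
    F y (a + 1) - F y a ≤ (f y a + f y (a + 1)) / 2 := by
  have hsub : Icc a (a+1) ⊆ Ioi (0:ℝ) := fun u hu => lt_of_lt_of_le ha hu.1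
  have hca : ContinuousOn (f y) (Set.uIcc a (a+1)) := by
    rw [Set.uIcc_of_le (by linarith : a ≤ a + 1)]
    exact f_contOn hy hsub
  have hint : IntervalIntegrable (f y) MeasureTheory.volume a (a+1) :=
    hca.intervalIntegrable
  have hFTC : ∫ u in a..(a+1), f y u = F y (a+1) - F y a := by
    refine intervalIntegral.integral_eq_sub_of_hasDerivAt (fun u hu => ?_) hint
    rw [Set.uIcc_of_le (by linarith)] at hu
    exact F_hasDeriv hy (hsub hu)
  rw [← hFTC]
  have hcomp : ∫ u in a..(a+1), f y u = ∫ t in (0:ℝ)..1, f y (a + t) := by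
    rw [intervalIntegral.integral_comp_add_left (f y) a]
    norm_num
  rw [hcomp]
  have hmono : ∫ t in (0:ℝ)..1, f y (a + t) ≤
      ∫ t in (0:ℝ)..1, ((1 - t) * f y a + t * f y (a + 1)) := by
    refine intervalIntegral.integral_mono_on (by norm_num) ?_ ?_ (fun t ht => ?_)
    · have : ∀ t ∈ uIcc (0:ℝ) 1, a + t ∈ Ioi (0:ℝ) := by
        intro t ht; rw [Set.uIcc_of_le (by norm_num)] at ht
        exact lt_of_lt_of_le ha (by linarith [ht.1])
      apply ContinuousOn.intervalIntegrable
      exact (f_contOn hy (fun u hu => hu)).comp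
        (continuousOn_const.add continuousOn_id) (fun t ht => this t ht)
    · apply ContinuousOn.intervalIntegrable
      fun_prop
    · have h1 := (f_convexOn hy).2 (mem_Ioi.2 ha) (mem_Ioi.2 (by linarith : (0:ℝ) < a + 1))
        (by linarith [ht.2] : (0:ℝ) ≤ 1 - t) ht.1 (by ring)
      calc f y (a + t) = f y ((1-t) • a + t • (a+1)) := by norm_num; ring_nf
        _ ≤ (1-t) • f y a + t • f y (a+1) := h1
        _ = (1 - t) * f y a + t * f y (a + 1) := by norm_num
  refine hmono.trans (le_of_eq ?_)
  have h1 : ∫ t in (0:ℝ)..1, ((1 - t) * f y a + t * f y (a + 1)) =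
      (∫ t in (0:ℝ)..1, (1 - t)) * f y a + (∫ t in (0:ℝ)..1, t) * f y (a+1) := by
    rw [intervalIntegral.integral_add, intervalIntegral.integral_mul_const,
      intervalIntegral.integral_mul_const]
    · exact (ContinuousOn.intervalIntegrable (by fun_prop))
    · exact (ContinuousOn.intervalIntegrable (by fun_prop))
  rw [h1]
  have h2 : (∫ t in (0:ℝ)..1, t) = 1/2 := by simp
  have h3 : (∫ t in (0:ℝ)..1, (1 - t)) = 1/2 := by
    rw [intervalIntegral.integral_sub intervalIntegrable_const
      (ContinuousOn.intervalIntegrable (by fun_prop))]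
    simp; norm_num
  rw [h2, h3]; ring

lemma sum_bound {y x : ℝ} (hy : 0 < y) (hx : 0 < x) (n : ℕ) :
    f y x / 2 + f y (x + n) / 2 + (F y (x + n) - F y x) ≤
      ∑ j ∈ Finset.range (n + 1), f y (x + j) := by
  induction n with
  | zero => simp
  | succ n ih =>
    rw [Finset.sum_range_succ]
    have htr := trapezoid hy (by positivity : (0:ℝ) < x + n)
    have hcast : ((n + 1 : ℕ) : ℝ) = (n : ℝ) + 1 := by push_cast; ring
    rw [hcast]
    have : x + ((n:ℝ) + 1) = (x + n) + 1 := by ring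
    rw [this]
    linarith [ih]

lemma exp_f (y : ℝ) {u : ℝ} (hu : 0 < u) : Real.exp (f y u) = (u ^ 2 + y ^ 2) / u ^ 2 := by
  unfold f
  rw [Real.exp_sub, Real.exp_log (by positivity)]
  congr 1
  rw [show (2:ℝ) * Real.log u = Real.log u + Real.log u by ring, Real.exp_add,
    Real.exp_log hu]
  ring

lemma abs_term (y : ℝ) {u : ℝ} (hu : 0 < u) :
    ‖(u : ℂ) + (y : ℂ) * Complex.I‖ = u * Real.exp (f y u / 2) := by
  have h1 : (‖(u : ℂ) + (y : ℂ) * Complex.I‖) ^ 2 = u ^ 2 + y ^ 2 := by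
    rw [Complex.sq_norm, Complex.normSq_apply]
    simp
    ring
  have h2 : (u * Real.exp (f y u / 2)) ^ 2 = u ^ 2 + y ^ 2 := by
    rw [mul_pow, sq (Real.exp _), ← Real.exp_add,
      show f y u / 2 + f y u / 2 = f y u by ring, exp_f y hu]
    field_simp
  have h3 : (0:ℝ) ≤ ‖(u : ℂ) + (y : ℂ) * Complex.I‖ := norm_nonneg _
  have h4 : (0:ℝ) ≤ u * Real.exp (f y u / 2) := by positivity
  calc ‖(u : ℂ) + (y : ℂ) * Complex.I‖
      = Real.sqrt ((‖(u : ℂ) + (y : ℂ) * Complex.I‖) ^ 2) := (Real.sqrt_sq h3).symm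
    _ = Real.sqrt ((u * Real.exp (f y u / 2)) ^ 2) := by rw [h1, h2]
    _ = u * Real.exp (f y u / 2) := Real.sqrt_sq h4

lemma gammaSeq_identity {x y : ℝ} (hx : 0 < x) (hy : 0 < y) {n : ℕ} (hn : 1 ≤ n) :
    ‖Complex.GammaSeq ((x : ℂ) + (y : ℂ) * Complex.I) n‖ *
      Real.exp ((∑ j ∈ Finset.range (n + 1), f y (x + j)) / 2) = Real.GammaSeq x n := by
  set z : ℂ := (x : ℂ) + (y : ℂ) * Complex.I with hz
  have hnpos : (0:ℝ) < (n : ℝ) := by exact_mod_cast hn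
  have hterm : ∀ j ∈ Finset.range (n + 1),
      ‖z + (j : ℂ)‖ = (x + j) * Real.exp (f y (x + j) / 2) := by
    intro j _
    have : z + (j : ℂ) = ((x + j : ℝ) : ℂ) + (y : ℂ) * Complex.I := by
      push_cast; ring
    rw [this, abs_term y (by positivity)]
  have habs : ‖Complex.GammaSeq z n‖ =
      (n : ℝ) ^ x * (n.factorial : ℝ) / ((∏ j ∈ Finset.range (n + 1), (x + j)) *
        Real.exp ((∑ j ∈ Finset.range (n + 1), f y (x + j)) / 2)) := by
    rw [Complex.GammaSeq, norm_div, norm_mul, norm_prod]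
    congr 1
    · congr 1
      · have : ((n : ℂ)) = (((n : ℝ)) : ℂ) := by push_cast; rfl
        rw [this, Complex.norm_cpow_eq_rpow_re_of_pos hnpos]
        congr 1
        simp [hz]
      · simp
    · rw [Finset.prod_congr rfl hterm, Finset.prod_mul_distrib, ← Real.exp_sum]
      congr 1
      rw [Finset.sum_div]
  rw [habs, Real.GammaSeq]
  have hprodpos : (0:ℝ) < ∏ j ∈ Finset.range (n + 1), (x + j) :=
    Finset.prod_pos fun j _ => by positivity
  field_simp

lemma f_le {y u : ℝ} (hy : 0 < y) (hu : 0 < u) : f y u ≤ y ^ 2 / u ^ 2 := by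
  have h1 : f y u = Real.log ((u ^ 2 + y ^ 2) / u ^ 2) := by
    unfold f
    rw [Real.log_div (by positivity) (by positivity)]
    congr 1
    rw [Real.log_pow]
    push_cast; ring
  rw [h1]
  have := Real.log_le_sub_one_of_pos (show (0:ℝ) < (u ^ 2 + y ^ 2) / u ^ 2 by positivity)
  have h2 : (u ^ 2 + y ^ 2) / u ^ 2 - 1 = y ^ 2 / u ^ 2 := by field_simp; ring
  linarith [h2 ▸ this]

lemma F_tendsto {x y : ℝ} (hx : 0 < x) (hy : 0 < y) :
    Tendsto (fun n : ℕ => F y (x + n)) atTop (𝓝 (π * y)) := by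
  have hu : Tendsto (fun n : ℕ => x + (n : ℝ)) atTop atTop :=
    tendsto_atTop_add_const_left _ x tendsto_natCast_atTop_atTop
  have hT1 : Tendsto (fun n : ℕ => (x + n) * (Real.log ((x + n) ^ 2 + y ^ 2)
      - 2 * Real.log (x + n))) atTop (𝓝 0) := by
    have hup : Tendsto (fun n : ℕ => y ^ 2 / (x + n)) atTop (𝓝 0) :=
      Tendsto.div_atTop tendsto_const_nhds hu
    refine tendsto_of_tendsto_of_tendsto_of_le_of_le tendsto_const_nhds hup
      (fun n => ?_) (fun n => ?_)
    · have h0 : (0:ℝ) < x + n := by positivity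
      exact mul_nonneg h0.le (f_nonneg h0)
    · have h0 : (0:ℝ) < x + n := by positivity
      have := f_le hy h0
      calc (x + n) * f y (x + n) ≤ (x + n) * (y ^ 2 / (x + n) ^ 2) :=
            mul_le_mul_of_nonneg_left this h0.le
        _ = y ^ 2 / (x + n) := by field_simp
  have hT2 : Tendsto (fun n : ℕ => 2 * y * Real.arctan ((x + n) / y)) atTop
      (𝓝 (2 * y * (π / 2))) := by
    have harg : Tendsto (fun n : ℕ => (x + (n:ℝ)) / y) atTop atTop :=
      hu.atTop_div_const hy
    exact ((Real.tendsto_arctan_atTop.mono_right nhdsWithin_le_nhds).comp harg).const_mul _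
  have := hT1.add hT2
  simp only [zero_add] at this
  convert this using 2
  · rfl
  ring

/-- Master Stirling-type bound. -/
lemma master {x y : ℝ} (hx : 0 < x) (hy : 0 < y) :
    ‖Complex.Gamma ((x : ℂ) + (y : ℂ) * Complex.I)‖ * Real.exp (π * y / 2) ≤
      Real.Gamma x *
        Real.exp ((x / 2 - 1 / 4) * (Real.log (x ^ 2 + y ^ 2) - 2 * Real.log x)
          + y * Real.arctan (x / y)) := by
  set z : ℂ := (x : ℂ) + (y : ℂ) * Complex.I with hz
  have key : ‖Complex.Gamma z‖ *
      Real.exp ((f y x / 2 + (π * y - F y x)) / 2) ≤ Real.Gamma x := by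
    have hA : Tendsto (fun n : ℕ => ‖Complex.GammaSeq z n‖ *
        Real.exp ((f y x / 2 + (F y (x + n) - F y x)) / 2)) atTop
        (𝓝 (‖Complex.Gamma z‖ *
          Real.exp ((f y x / 2 + (π * y - F y x)) / 2))) := by
      have h1 : Tendsto (fun n : ℕ => ‖Complex.GammaSeq z n‖) atTop
          (𝓝 (‖Complex.Gamma z‖)) :=
        (continuous_norm.tendsto _).comp (Complex.GammaSeq_tendsto_Gamma z)
      have h2 : Tendsto (fun n : ℕ => (f y x / 2 + (F y (x + n) - F y x)) / 2) atTop
          (𝓝 ((f y x / 2 + (π * y - F y x)) / 2)) :=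
        (((F_tendsto hx hy).sub_const (F y x)).const_add (f y x / 2)).div_const 2
      exact h1.mul ((Real.continuous_exp.tendsto _).comp h2)
    refine le_of_tendsto_of_tendsto hA (Real.GammaSeq_tendsto_Gamma x) ?_
    filter_upwards [eventually_ge_atTop 1] with n hn
    have hid := gammaSeq_identity hx hy hn
    have hS := sum_bound hy hx n
    have h0 : (0:ℝ) < x + n := by positivity
    have hexp : Real.exp ((f y x / 2 + (F y (x + n) - F y x)) / 2) ≤
        Real.exp ((∑ j ∈ Finset.range (n + 1), f y (x + j)) / 2) := by
      apply Real.exp_le_exp.2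
      have := f_nonneg (y := y) h0
      linarith
    calc ‖Complex.GammaSeq z n‖ *
          Real.exp ((f y x / 2 + (F y (x + n) - F y x)) / 2)
        ≤ ‖Complex.GammaSeq z n‖ *
          Real.exp ((∑ j ∈ Finset.range (n + 1), f y (x + j)) / 2) :=
          mul_le_mul_of_nonneg_left hexp (norm_nonneg _)
      _ = Real.GammaSeq x n := hid
  have hc : (0:ℝ) < Real.exp (F y x / 2 - f y x / 4) := Real.exp_pos _
  have := mul_le_mul_of_nonneg_right key hc.le
  calc ‖Complex.Gamma z‖ * Real.exp (π * y / 2)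
      = ‖Complex.Gamma z‖ * Real.exp ((f y x / 2 + (π * y - F y x)) / 2) *
        Real.exp (F y x / 2 - f y x / 4) := by
        rw [mul_assoc, ← Real.exp_add]
        congr 2
        ring
    _ ≤ Real.Gamma x * Real.exp (F y x / 2 - f y x / 4) := this
    _ = Real.Gamma x * Real.exp ((x / 2 - 1 / 4) * (Real.log (x ^ 2 + y ^ 2)
          - 2 * Real.log x) + y * Real.arctan (x / y)) := by
        congr 2
        unfold F f
        ring

lemma interp {s t : ℝ} (hs : 0 < s) (ht : 0 < t) :
    Real.Gamma ((s + t) / 2) ≤ Real.sqrt (Real.Gamma s * Real.Gamma t) := by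
  have h := Real.Gamma_mul_add_mul_le_rpow_Gamma_mul_rpow_Gamma hs ht one_half_pos one_half_pos
    (by norm_num)
  rw [show (1/2:ℝ) * s + (1/2:ℝ) * t = (s + t)/2 by ring] at h
  refine h.trans (le_of_eq ?_)
  rw [← Real.mul_rpow (Real.Gamma_pos_of_pos hs).le (Real.Gamma_pos_of_pos ht).le,
    ← Real.sqrt_eq_rpow]

lemma Gamma_32 : Real.Gamma (3/2) = Real.sqrt π / 2 := by
  rw [show (3/2:ℝ) = 1/2 + 1 by norm_num, Real.Gamma_add_one (by norm_num),
    Real.Gamma_one_half_eq]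
  ring

lemma Gamma_52 : Real.Gamma (5/2) = 3 * Real.sqrt π / 4 := by
  rw [show (5/2:ℝ) = 3/2 + 1 by norm_num, Real.Gamma_add_one (by norm_num), Gamma_32]
  ring

lemma hG14 : Real.Gamma (1/4) ≤ 16/5 * Real.sqrt (3 * Real.sqrt π / 4) := by
  have h1 : Real.Gamma (9/4) = (5/4) * ((1/4) * Real.Gamma (1/4)) := by
    rw [show (9/4:ℝ) = 5/4 + 1 by norm_num, Real.Gamma_add_one (by norm_num),
      show (5/4:ℝ) = 1/4 + 1 by norm_num, Real.Gamma_add_one (by norm_num)]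
  have h2 := interp (show (0:ℝ) < 2 by norm_num) (show (0:ℝ) < 5/2 by norm_num)
  rw [show ((2:ℝ) + 5/2)/2 = 9/4 by norm_num, Real.Gamma_two, Gamma_52, one_mul] at h2
  rw [h1] at h2
  linarith

lemma hG34 : Real.Gamma (3/4) ≤ 4/3 * Real.sqrt (Real.sqrt π / 2) := by
  have h1 : Real.Gamma (7/4) = (3/4) * Real.Gamma (3/4) := by
    rw [show (7/4:ℝ) = 3/4 + 1 by norm_num, Real.Gamma_add_one (by norm_num)]
  have h2 := interp (show (0:ℝ) < 3/2 by norm_num) (show (0:ℝ) < 2 by norm_num)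
  rw [show ((3:ℝ)/2 + 2)/2 = 7/4 by norm_num, Real.Gamma_two, Gamma_32, mul_one] at h2
  rw [h1] at h2
  linarith

lemma sqrt_pi_lb : (1.7724 : ℝ) ≤ Real.sqrt π := by
  rw [show (1.7724:ℝ) = Real.sqrt (1.7724^2) from (Real.sqrt_sq (by norm_num)).symm]
  apply Real.sqrt_le_sqrt
  nlinarith [Real.pi_gt_d6]

lemma exp_quarter_pi_lb : (2.19 : ℝ) ≤ Real.exp (π / 4) := by
  have hq : (0.785398 : ℝ) ≤ π / 4 := by nlinarith [Real.pi_gt_d6]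
  have h := Real.sum_le_exp_of_nonneg (show (0:ℝ) ≤ π/4 by positivity) 5
  have hexpand : ∑ i ∈ Finset.range 5, (π/4) ^ i / i.factorial =
      1 + π/4 + (π/4)^2/2 + (π/4)^3/6 + (π/4)^4/24 := by
    rw [Finset.sum_range_succ, Finset.sum_range_succ, Finset.sum_range_succ,
      Finset.sum_range_succ, Finset.sum_range_succ, Finset.sum_range_zero]
    norm_num [Nat.factorial]
  rw [hexpand] at h
  have h2 : (0.785398:ℝ)^2 ≤ (π/4)^2 := by nlinarith
  have h3 : (0.785398:ℝ)^3 ≤ (π/4)^3 := by nlinarith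
  have h4 : (0.785398:ℝ)^4 ≤ (π/4)^4 := by nlinarith
  nlinarith [h]

/-- numeric: `(16/5)√(3√π/4) ≤ √(2π) e^{π/8}` -/
lemma numA : 16/5 * Real.sqrt (3 * Real.sqrt π / 4) ≤ Real.sqrt (2*π) * Real.exp (π/8) := by
  have hs := sqrt_pi_lb
  have hs0 : (0:ℝ) ≤ Real.sqrt π := Real.sqrt_nonneg _
  have hE := exp_quarter_pi_lb
  have hY0 : (0:ℝ) ≤ Real.sqrt (2*π) * Real.exp (π/8) := by positivity
  refine le_of_pow_le_pow_left₀ (n := 2) (by norm_num) hY0 ?_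
  have l1 : (16/5 * Real.sqrt (3 * Real.sqrt π / 4))^2 = (256/25) * (3 * Real.sqrt π / 4) := by
    rw [mul_pow, Real.sq_sqrt (by positivity)]
    ring
  have l2 : (Real.sqrt (2*π) * Real.exp (π/8))^2 = 2*π * Real.exp (π/4) := by
    rw [mul_pow, Real.sq_sqrt (by positivity), sq (Real.exp _), ← Real.exp_add,
      show π/8 + π/8 = π/4 by ring]
  rw [l1, l2]
  have hpi : Real.sqrt π ^ 2 = π := Real.sq_sqrt Real.pi_pos.le
  have hsE := mul_le_mul hs hE (by norm_num) hs0
  nlinarith [mul_le_mul_of_nonneg_left hsE hs0, hs, hs0]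

/-- numeric: `(4/3)√(√π/2)·(2/3)^{1/4}·e^{3/4} ≤ 2^{1/4}·√π·e^{1/6}` -/
lemma numB : 4/3 * Real.sqrt (Real.sqrt π / 2) * ((2:ℝ)/3) ^ ((1:ℝ)/4) * Real.exp (3/4) ≤
    (2:ℝ) ^ ((1:ℝ)/4) * Real.sqrt π * Real.exp (1/6) := by
  have hY0 : (0:ℝ) ≤ (2:ℝ) ^ ((1:ℝ)/4) * Real.sqrt π * Real.exp (1/6) := by positivity
  refine le_of_pow_le_pow_left₀ (n := 4) (by norm_num) hY0 ?_
  have e1 : (((2:ℝ)/3) ^ ((1:ℝ)/4))^(4:ℕ) = 2/3 := by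
    rw [← Real.rpow_natCast (((2:ℝ)/3) ^ ((1:ℝ)/4)) 4, ← Real.rpow_mul (by norm_num)]
    norm_num
  have e2 : (((2:ℝ)) ^ ((1:ℝ)/4))^(4:ℕ) = 2 := by
    rw [← Real.rpow_natCast (((2:ℝ)) ^ ((1:ℝ)/4)) 4, ← Real.rpow_mul (by norm_num)]
    norm_num
  have e3 : (Real.sqrt (Real.sqrt π / 2))^(4:ℕ) = (Real.sqrt π / 2)^2 := by
    rw [show (4:ℕ) = 2*2 from rfl, pow_mul, Real.sq_sqrt (by positivity)]
  have e4 : (Real.exp (3/4:ℝ))^(4:ℕ) = Real.exp 3 := by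
    rw [← Real.exp_nat_mul]; norm_num
  have e5 : (Real.exp (1/6:ℝ))^(4:ℕ) = Real.exp (2/3) := by
    rw [← Real.exp_nat_mul]; norm_num
  have e6 : (Real.sqrt π)^(4:ℕ) = π^2 := by
    rw [show (4:ℕ) = 2*2 from rfl, pow_mul, Real.sq_sqrt Real.pi_pos.le]
  calc (4/3 * Real.sqrt (Real.sqrt π / 2) * ((2:ℝ)/3) ^ ((1:ℝ)/4) * Real.exp (3/4))^(4:ℕ)
      = (4/3:ℝ)^4 * ((Real.sqrt π / 2)^2) * (2/3) * Real.exp 3 := by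
        rw [mul_pow, mul_pow, mul_pow, e1, e3, e4]
    _ = (128/243) * π * Real.exp 3 := by
        have : (Real.sqrt π / 2)^2 = π/4 := by
          rw [div_pow, Real.sq_sqrt Real.pi_pos.le]; norm_num
        rw [this]; ring
    _ ≤ 2 * π^2 * Real.exp (2/3) := by
        have hexp3 : Real.exp 3 ≤ 20.09 := by
          have h1 : Real.exp 3 = (Real.exp 1)^(3:ℕ) := by
            rw [← Real.exp_nat_mul]; norm_num
          have h2 := Real.exp_one_lt_d9
          rw [h1]
          calc (Real.exp 1)^(3:ℕ) ≤ (2.7182818286:ℝ)^(3:ℕ) :=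
                pow_le_pow_left₀ (Real.exp_pos 1).le h2.le 3
            _ ≤ 20.09 := by norm_num
        have hexp23 : (17/9:ℝ) ≤ Real.exp (2/3) := by
          have := Real.quadratic_le_exp_of_nonneg (show (0:ℝ) ≤ 2/3 by norm_num)
          nlinarith [this]
        nlinarith [Real.pi_gt_d6, Real.pi_pos]
    _ = ((2:ℝ) ^ ((1:ℝ)/4) * Real.sqrt π * Real.exp (1/6))^(4:ℕ) := by
        rw [mul_pow, mul_pow, e2, e5, e6]

/-- numeric: `(4/3)√(√π/2)·e^{3/4} ≤ √(2π)·e^{π/8+1/4}` -/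
lemma numC : 4/3 * Real.sqrt (Real.sqrt π / 2) * Real.exp (3/4) ≤
    Real.sqrt (2*π) * Real.exp (π/8 + 1/4) := by
  have hY0 : (0:ℝ) ≤ Real.sqrt (2*π) * Real.exp (π/8 + 1/4) := by positivity
  refine le_of_pow_le_pow_left₀ (n := 8) (by norm_num) hY0 ?_
  have e3 : (Real.sqrt (Real.sqrt π / 2))^(8:ℕ) = (Real.sqrt π / 2)^(4:ℕ) := by
    rw [show (8:ℕ) = 2*4 from rfl, pow_mul, Real.sq_sqrt (by positivity)]
  have e4 : (Real.exp (3/4:ℝ))^(8:ℕ) = Real.exp 6 := by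
    rw [← Real.exp_nat_mul]; norm_num
  have e5 : (Real.sqrt (2*π))^(8:ℕ) = (2*π)^(4:ℕ) := by
    rw [show (8:ℕ) = 2*4 from rfl, pow_mul, Real.sq_sqrt (by positivity)]
  have e6 : (Real.exp (π/8 + 1/4:ℝ))^(8:ℕ) = Real.exp (π + 2) := by
    rw [← Real.exp_nat_mul]
    congr 1
    push_cast
    ring
  calc (4/3 * Real.sqrt (Real.sqrt π / 2) * Real.exp (3/4))^(8:ℕ)
      = (4/3:ℝ)^8 * ((Real.sqrt π/2)^(4:ℕ)) * Real.exp 6 := by rw [mul_pow, mul_pow, e3, e4]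
    _ = (4096/6561) * π^2 * Real.exp 6 := by
        have : (Real.sqrt π / 2)^(4:ℕ) = π^2/16 := by
          rw [div_pow, show (4:ℕ) = 2*2 from rfl, pow_mul, Real.sq_sqrt Real.pi_pos.le]
          norm_num
        rw [this]; ring
    _ ≤ (2*π)^(4:ℕ) * Real.exp (π + 2) := by
        have h1 : Real.exp 6 = Real.exp 5 * Real.exp 1 := by
          rw [← Real.exp_add]; norm_num
        have h2 : Real.exp 5 ≤ Real.exp (π + 2) := by
          apply Real.exp_le_exp.2
          nlinarith [Real.pi_gt_d6]
        have h3 := Real.exp_one_lt_d9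
        have h4 := Real.exp_pos 5
        have h5 := Real.exp_pos (π + 2)
        calc (4096/6561) * π^2 * Real.exp 6
            = (4096/6561) * π^2 * Real.exp 1 * Real.exp 5 := by rw [h1]; ring
          _ ≤ (4096/6561) * π^2 * Real.exp 1 * Real.exp (π+2) := by
              refine mul_le_mul_of_nonneg_left h2 ?_
              positivity
          _ ≤ (2*π)^(4:ℕ) * Real.exp (π + 2) := by
              refine mul_le_mul_of_nonneg_right ?_ h5.le
              have hπ2 : (9:ℝ) ≤ π^2 := by nlinarith [Real.pi_gt_d6]
              have key : (4096/6561:ℝ) * Real.exp 1 ≤ 16*π^2 := by nlinarith [h3, hπ2, Real.exp_pos 1]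
              have := mul_le_mul_of_nonneg_right key (sq_nonneg π)
              calc (4096/6561) * π^2 * Real.exp 1 = (4096/6561) * Real.exp 1 * π^2 := by ring
                _ ≤ 16*π^2*π^2 := this
                _ = (2*π)^(4:ℕ) := by ring
    _ = (Real.sqrt (2*π) * Real.exp (π/8 + 1/4))^(8:ℕ) := by
        rw [mul_pow (Real.sqrt (2*π)) (Real.exp (π/8 + 1/4)) 8, e5, e6]

lemma arctan_le_self {v : ℝ} (hv : 0 ≤ v) : Real.arctan v ≤ v := by
  rcases eq_or_lt_of_le hv with h | h
  · simp [← h]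
  · have h1 : 0 < Real.arctan v := by
      rw [← Real.arctan_zero]
      exact Real.arctan_strictMono h
    have := Real.lt_tan h1 (Real.arctan_lt_pi_div_two v)
    rw [Real.tan_arctan] at this
    exact this.le

lemma f_nonneg' {y u : ℝ} (hu : 0 < u) : 0 ≤ Real.log (u ^ 2 + y ^ 2) - 2 * Real.log u :=
  f_nonneg hu

lemma arctan_term_le {x y : ℝ} (hx : 0 < x) (hy : 0 < y) : y * Real.arctan (x / y) ≤ x := by
  have h1 : Real.arctan (x / y) ≤ x / y := arctan_le_self (by positivity)
  calc y * Real.arctan (x / y) ≤ y * (x / y) := mul_le_mul_of_nonneg_left h1 hy.le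
    _ = x := by field_simp

lemma caseA {y : ℝ} (hy : 0 < y) :
    ‖Complex.Gamma (((1/4 : ℝ) : ℂ) + (y : ℂ) * Complex.I)‖ *
      Real.exp (π * y / 2) ≤ Real.sqrt (2*π) * Real.exp (π/8 + 1/4) := by
  have hm := master (show (0:ℝ) < 1/4 by norm_num) hy
  have he : ((1:ℝ)/4 / 2 - 1 / 4) * (Real.log ((1/4:ℝ) ^ 2 + y ^ 2) - 2 * Real.log (1/4))
      + y * Real.arctan ((1/4:ℝ) / y) ≤ 1/4 := by
    have h1 : ((1:ℝ)/4 / 2 - 1 / 4) * (Real.log ((1/4:ℝ) ^ 2 + y ^ 2) - 2 * Real.log (1/4)) ≤ 0 :=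
      mul_nonpos_of_nonpos_of_nonneg (by norm_num) (f_nonneg' (by norm_num))
    have h2 := arctan_term_le (show (0:ℝ) < 1/4 by norm_num) hy
    linarith
  calc ‖Complex.Gamma (((1/4 : ℝ) : ℂ) + (y : ℂ) * Complex.I)‖ * Real.exp (π * y / 2)
      ≤ Real.Gamma (1/4) * Real.exp (((1:ℝ)/4 / 2 - 1 / 4) *
          (Real.log ((1/4:ℝ) ^ 2 + y ^ 2) - 2 * Real.log (1/4))
          + y * Real.arctan ((1/4:ℝ) / y)) := hm
    _ ≤ Real.Gamma (1/4) * Real.exp (1/4) :=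
        mul_le_mul_of_nonneg_left (Real.exp_le_exp.2 he)
          (Real.Gamma_pos_of_pos (by norm_num)).le
    _ ≤ (16/5 * Real.sqrt (3 * Real.sqrt π / 4)) * Real.exp (1/4) :=
        mul_le_mul_of_nonneg_right hG14 (Real.exp_pos _).le
    _ ≤ (Real.sqrt (2*π) * Real.exp (π/8)) * Real.exp (1/4) :=
        mul_le_mul_of_nonneg_right numA (Real.exp_pos _).le
    _ = Real.sqrt (2*π) * Real.exp (π/8 + 1/4) := by
        rw [mul_assoc, ← Real.exp_add]

lemma exponent_bound_B {y : ℝ} (hy : 0 < y) :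
    ((3:ℝ)/4 / 2 - 1 / 4) * (Real.log ((3/4:ℝ) ^ 2 + y ^ 2) - 2 * Real.log (3/4))
      + y * Real.arctan ((3/4:ℝ) / y) ≤
      1/4 * Real.log ((2/3) * (3/2 + 2*y)) + 3/4 := by
  have hL : Real.log ((3/4:ℝ) ^ 2 + y ^ 2) - 2 * Real.log (3/4) ≤
      2 * Real.log ((2/3) * (3/2 + 2*y)) := by
    have h1 : Real.log ((3/4:ℝ) ^ 2 + y ^ 2) ≤ Real.log (((3:ℝ)/4 + y) ^ 2) :=
      Real.log_le_log (by positivity) (by nlinarith)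
    have h2 : Real.log (((3:ℝ)/4 + y) ^ 2) = 2 * Real.log ((3:ℝ)/4 + y) := by
      rw [Real.log_pow]; push_cast; ring
    have h3 : Real.log ((3:ℝ)/4 + y) - Real.log (3/4) = Real.log ((2/3) * (3/2 + 2*y)) := by
      rw [← Real.log_div (by positivity) (by norm_num)]
      congr 1
      ring
    linarith
  have h2 := arctan_term_le (show (0:ℝ) < 3/4 by norm_num) hy
  linarith

lemma caseB {y : ℝ} (hy : 0 < y) :
    ‖Complex.Gamma (((3/4 : ℝ) : ℂ) + (y : ℂ) * Complex.I)‖ *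
      Real.exp (π * y / 2) ≤
      (2:ℝ) ^ ((1:ℝ)/4) * Real.sqrt π * (3/2 + 2*y) ^ ((1:ℝ)/4) * Real.exp (1/6) := by
  have hm := master (show (0:ℝ) < 3/4 by norm_num) hy
  have hc : (0:ℝ) < (2/3) * (3/2 + 2*y) := by positivity
  have hsplit : Real.exp (1/4 * Real.log ((2/3) * (3/2 + 2*y)) + 3/4) =
      ((2:ℝ)/3) ^ ((1:ℝ)/4) * (3/2 + 2*y) ^ ((1:ℝ)/4) * Real.exp (3/4) := by
    rw [Real.exp_add, ← Real.mul_rpow (by norm_num) (by positivity),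
      Real.rpow_def_of_pos hc]
    ring_nf
  calc ‖Complex.Gamma (((3/4 : ℝ) : ℂ) + (y : ℂ) * Complex.I)‖ * Real.exp (π * y / 2)
      ≤ Real.Gamma (3/4) * Real.exp (((3:ℝ)/4 / 2 - 1 / 4) *
          (Real.log ((3/4:ℝ) ^ 2 + y ^ 2) - 2 * Real.log (3/4))
          + y * Real.arctan ((3/4:ℝ) / y)) := hm
    _ ≤ Real.Gamma (3/4) * Real.exp (1/4 * Real.log ((2/3) * (3/2 + 2*y)) + 3/4) :=
        mul_le_mul_of_nonneg_left (Real.exp_le_exp.2 (exponent_bound_B hy))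
          (Real.Gamma_pos_of_pos (by norm_num)).le
    _ = (Real.Gamma (3/4) * ((2:ℝ)/3) ^ ((1:ℝ)/4) * Real.exp (3/4)) *
          (3/2 + 2*y) ^ ((1:ℝ)/4) := by
        rw [hsplit]; ring
    _ ≤ ((4:ℝ)/3 * Real.sqrt (Real.sqrt π / 2) * ((2:ℝ)/3) ^ ((1:ℝ)/4) * Real.exp (3/4)) *
          (3/2 + 2*y) ^ ((1:ℝ)/4) := by
        refine mul_le_mul_of_nonneg_right ?_ (by positivity)
        refine mul_le_mul_of_nonneg_right (mul_le_mul_of_nonneg_right hG34 (by positivity)) ?_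
        positivity
    _ ≤ ((2:ℝ) ^ ((1:ℝ)/4) * Real.sqrt π * Real.exp (1/6)) * (3/2 + 2*y) ^ ((1:ℝ)/4) :=
        mul_le_mul_of_nonneg_right numB (by positivity)
    _ = (2:ℝ) ^ ((1:ℝ)/4) * Real.sqrt π * (3/2 + 2*y) ^ ((1:ℝ)/4) * Real.exp (1/6) := by ring

lemma caseC {y : ℝ} (hy : 0 < y) :
    ‖Complex.Gamma (((3/4 : ℝ) : ℂ) + (y : ℂ) * Complex.I)‖ *
      Real.exp (-(π * y / 2)) ≤ Real.sqrt (2*π) * Real.exp (π/8 + 1/4) := by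
  have hm := master (show (0:ℝ) < 3/4 by norm_num) hy
  have he : ((3:ℝ)/4 / 2 - 1 / 4) * (Real.log ((3/4:ℝ) ^ 2 + y ^ 2) - 2 * Real.log (3/4))
      + y * Real.arctan ((3/4:ℝ) / y) - π * y ≤ 3/4 := by
    have h1 := exponent_bound_B hy
    have h2 : Real.log ((2/3) * (3/2 + 2*y)) ≤ 4*y/3 := by
      have h3 : ((2:ℝ)/3) * (3/2 + 2*y) = 1 + 4*y/3 := by ring
      rw [h3]
      have := Real.log_le_sub_one_of_pos (show (0:ℝ) < 1 + 4*y/3 by positivity)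
      linarith
    have h4 : y/3 ≤ π * y := by nlinarith [Real.pi_gt_d6]
    linarith
  have key : ‖Complex.Gamma (((3/4 : ℝ) : ℂ) + (y : ℂ) * Complex.I)‖ *
      Real.exp (-(π * y / 2)) ≤ Real.Gamma (3/4) * Real.exp (3/4) := by
    have h5 := mul_le_mul_of_nonneg_right hm (Real.exp_pos (-(π * y))).le
    calc ‖Complex.Gamma (((3/4 : ℝ) : ℂ) + (y : ℂ) * Complex.I)‖ *
          Real.exp (-(π * y / 2))
        = ‖Complex.Gamma (((3/4 : ℝ) : ℂ) + (y : ℂ) * Complex.I)‖ *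
          Real.exp (π * y / 2) * Real.exp (-(π * y)) := by
          rw [mul_assoc, ← Real.exp_add]
          congr 2
          ring
      _ ≤ Real.Gamma (3/4) * Real.exp (((3:ℝ)/4 / 2 - 1 / 4) *
          (Real.log ((3/4:ℝ) ^ 2 + y ^ 2) - 2 * Real.log (3/4))
          + y * Real.arctan ((3/4:ℝ) / y)) * Real.exp (-(π * y)) := h5
      _ = Real.Gamma (3/4) * Real.exp (((3:ℝ)/4 / 2 - 1 / 4) *
          (Real.log ((3/4:ℝ) ^ 2 + y ^ 2) - 2 * Real.log (3/4))
          + y * Real.arctan ((3/4:ℝ) / y) - π * y) := by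
          rw [mul_assoc, ← Real.exp_add]
          ring_nf
      _ ≤ Real.Gamma (3/4) * Real.exp (3/4) :=
          mul_le_mul_of_nonneg_left (Real.exp_le_exp.2 he)
            (Real.Gamma_pos_of_pos (by norm_num)).le
  refine key.trans ?_
  calc Real.Gamma (3/4) * Real.exp (3/4)
      ≤ (4/3 * Real.sqrt (Real.sqrt π / 2)) * Real.exp (3/4) :=
        mul_le_mul_of_nonneg_right hG34 (Real.exp_pos _).le
    _ ≤ Real.sqrt (2*π) * Real.exp (π/8 + 1/4) := numC

end
end GB

open Complex

section
open Real

/-- Stirling-type bound: for `t ∈ ℝ` and `a ∈ {0,1}`,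
`|Γ((1/2+it+a)/2)| e^{πt/4} ≤ max(2^{1/4}√π (3/2+max(t,0))^{1/4} e^{1/6}, √(2π) e^{π/8+1/4})`. -/
theorem gamma_bound (t : ℝ) (a : ℕ) (ha : a = 0 ∨ a = 1) :
    ‖Complex.Gamma ((1 / 2 + Complex.I * t + a) / 2)‖ * Real.exp (Real.pi * t / 4) ≤
      max ((2 : ℝ) ^ ((1 : ℝ) / 4) * Real.sqrt Real.pi *
            (3 / 2 + max t 0) ^ ((1 : ℝ) / 4) * Real.exp (1 / 6))
          (Real.sqrt (2 * Real.pi) * Real.exp (Real.pi / 8 + 1 / 4)) := by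
  rcases ha with ha | ha
  · -- a = 0
    subst ha
    refine le_trans ?_ (le_max_right _ _)
    rcases lt_trichotomy t 0 with ht | ht | ht
    · -- t < 0
      have hy : (0:ℝ) < -t/2 := by linarith
      have hz : ((1 / 2 + Complex.I * (t:ℂ) + ((0:ℕ):ℂ)) / 2 : ℂ) =
          ((1/4 : ℝ) : ℂ) + ((t/2 : ℝ) : ℂ) * Complex.I := by push_cast; ring
      have hconj : (((1/4 : ℝ) : ℂ) + ((t/2 : ℝ) : ℂ) * Complex.I) =
          starRingEnd ℂ (((1/4 : ℝ) : ℂ) + ((-t/2 : ℝ) : ℂ) * Complex.I) := by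
        rw [map_add, map_mul, Complex.conj_ofReal, Complex.conj_ofReal, Complex.conj_I]
        push_cast; ring
      rw [hz, hconj, Complex.Gamma_conj, Complex.norm_conj]
      have hle : Real.exp (π * t / 4) ≤ Real.exp (π * (-t/2) / 2) := by
        apply Real.exp_le_exp.2
        nlinarith [Real.pi_pos]
      calc ‖Complex.Gamma (((1/4 : ℝ) : ℂ) + ((-t/2 : ℝ) : ℂ) * Complex.I)‖ *
            Real.exp (π * t / 4)
          ≤ ‖Complex.Gamma (((1/4 : ℝ) : ℂ) + ((-t/2 : ℝ) : ℂ) * Complex.I)‖ *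
            Real.exp (π * (-t/2) / 2) :=
            mul_le_mul_of_nonneg_left hle (norm_nonneg _)
        _ ≤ Real.sqrt (2*π) * Real.exp (π/8 + 1/4) := GB.caseA hy
    · -- t = 0
      subst ht
      have hz : ((1 / 2 + Complex.I * ((0:ℝ):ℂ) + ((0:ℕ):ℂ)) / 2 : ℂ) = ((1/4 : ℝ) : ℂ) := by
        push_cast; ring
      rw [hz, Complex.Gamma_ofReal]
      have hpos := Real.Gamma_pos_of_pos (show (0:ℝ) < 1/4 by norm_num)
      rw [Complex.norm_real, Real.norm_eq_abs, abs_of_pos hpos]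
      have h1 : Real.Gamma (1/4) * Real.exp (π * 0 / 4) = Real.Gamma (1/4) := by
        norm_num
      rw [h1]
      calc Real.Gamma (1/4) ≤ 16/5 * Real.sqrt (3 * Real.sqrt π / 4) := GB.hG14
        _ ≤ Real.sqrt (2*π) * Real.exp (π/8) := GB.numA
        _ ≤ Real.sqrt (2*π) * Real.exp (π/8 + 1/4) := by
            apply mul_le_mul_of_nonneg_left (Real.exp_le_exp.2 (by norm_num)) (Real.sqrt_nonneg _)
    · -- t > 0
      have hy : (0:ℝ) < t/2 := by linarith
      have hz : ((1 / 2 + Complex.I * (t:ℂ) + ((0:ℕ):ℂ)) / 2 : ℂ) =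
          ((1/4 : ℝ) : ℂ) + ((t/2 : ℝ) : ℂ) * Complex.I := by push_cast; ring
      rw [hz]
      have := GB.caseA hy
      rw [show π * (t/2) / 2 = π * t / 4 by ring] at this
      exact this
  · -- a = 1
    subst ha
    rcases lt_trichotomy t 0 with ht | ht | ht
    · -- t < 0
      refine le_trans ?_ (le_max_right _ _)
      have hy : (0:ℝ) < -t/2 := by linarith
      have hz : ((1 / 2 + Complex.I * (t:ℂ) + ((1:ℕ):ℂ)) / 2 : ℂ) =
          ((3/4 : ℝ) : ℂ) + ((t/2 : ℝ) : ℂ) * Complex.I := by push_cast; ring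
      have hconj : (((3/4 : ℝ) : ℂ) + ((t/2 : ℝ) : ℂ) * Complex.I) =
          starRingEnd ℂ (((3/4 : ℝ) : ℂ) + ((-t/2 : ℝ) : ℂ) * Complex.I) := by
        rw [map_add, map_mul, Complex.conj_ofReal, Complex.conj_ofReal, Complex.conj_I]
        push_cast; ring
      rw [hz, hconj, Complex.Gamma_conj, Complex.norm_conj]
      have hle : π * t / 4 = -(π * (-t/2) / 2) := by ring
      rw [hle]
      exact GB.caseC hy
    · -- t = 0
      subst ht
      refine le_trans ?_ (le_max_right _ _)
      have hz : ((1 / 2 + Complex.I * ((0:ℝ):ℂ) + ((1:ℕ):ℂ)) / 2 : ℂ) = ((3/4 : ℝ) : ℂ) := by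
        push_cast; ring
      rw [hz, Complex.Gamma_ofReal]
      have hpos := Real.Gamma_pos_of_pos (show (0:ℝ) < 3/4 by norm_num)
      rw [Complex.norm_real, Real.norm_eq_abs, abs_of_pos hpos]
      have h1 : Real.Gamma (3/4) * Real.exp (π * 0 / 4) = Real.Gamma (3/4) := by norm_num
      rw [h1]
      have hone : (1:ℝ) ≤ Real.exp (3/4) := by
        rw [show (1:ℝ) = Real.exp 0 by simp]
        exact Real.exp_le_exp.2 (by norm_num)
      calc Real.Gamma (3/4) ≤ 4/3 * Real.sqrt (Real.sqrt π / 2) := GB.hG34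
        _ ≤ 4/3 * Real.sqrt (Real.sqrt π / 2) * Real.exp (3/4) := by
            nlinarith [Real.sqrt_nonneg (Real.sqrt π / 2), hone]
        _ ≤ Real.sqrt (2*π) * Real.exp (π/8 + 1/4) := GB.numC
    · -- t > 0
      refine le_trans ?_ (le_max_left _ _)
      have hy : (0:ℝ) < t/2 := by linarith
      have hz : ((1 / 2 + Complex.I * (t:ℂ) + ((1:ℕ):ℂ)) / 2 : ℂ) =
          ((3/4 : ℝ) : ℂ) + ((t/2 : ℝ) : ℂ) * Complex.I := by push_cast; ring
      rw [hz]
      have h := GB.caseB hy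
      rw [show π * (t/2) / 2 = π * t / 4 by ring,
        show (3/2 + 2*(t/2) : ℝ) = 3/2 + t by ring] at h
      rw [show max t 0 = t from max_eq_left ht.le]
      exact h

end
end

section
/- For all real t ≥ 0 and h > 0, the integral P(t₀,h) := ∫_{-∞}^∞ |Γ((3+it)/2)| exp(πt/4) exp(-(t-t₀)²/(2h²)) dt satisfies P(t₀,h) ≤ hπ ( t₀ + h/√(2π) + 1 + 1/(2√2) ), where t₀ ≥ 0. -/
open Complex MeasureTheory Set

lemma abs_gamma_half_sq (t : ℝ) :
    (‖Complex.Gamma ((1 + Complex.I * t) / 2)‖) ^ 2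
      = Real.pi / Real.cosh (Real.pi * t / 2) := by
  set z : ℂ := (1 + Complex.I * t) / 2 with hz
  have hconj : (starRingEnd ℂ) z = 1 - z := by
    rw [hz]
    simp only [map_div₀, map_add, map_mul, map_one, Complex.conj_I, Complex.conj_ofReal,
      map_ofNat]
    ring
  have hrefl := Complex.Gamma_mul_Gamma_one_sub z
  rw [← hconj, Complex.Gamma_conj, Complex.mul_conj] at hrefl
  have hsin : Complex.sin (↑Real.pi * z) = ↑(Real.cosh (Real.pi * t / 2)) := by
    have hpz : (Real.pi : ℂ) * z = ↑(Real.pi / 2) + ↑(Real.pi * t / 2) * Complex.I := by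
      rw [hz]; push_cast; ring
    rw [hpz, Complex.sin_add, ← Complex.ofReal_sin, ← Complex.ofReal_cos,
      Real.sin_pi_div_two, Real.cos_pi_div_two, Complex.cos_mul_I, ← Complex.ofReal_cosh]
    simp
  rw [hsin] at hrefl
  have hcast : (Complex.normSq (Complex.Gamma z) : ℂ)
      = ((Real.pi / Real.cosh (Real.pi * t / 2) : ℝ) : ℂ) := by
    rw [hrefl]; push_cast; ring
  have h2 : Complex.normSq (Complex.Gamma z) = Real.pi / Real.cosh (Real.pi * t / 2) := by
    exact_mod_cast hcast
  rw [Complex.sq_norm, h2]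

lemma abs_gamma_three (t : ℝ) :
    ‖Complex.Gamma ((3 + Complex.I * t) / 2)‖
      = Real.sqrt (1 + t ^ 2) / 2 * Real.sqrt (Real.pi / Real.cosh (Real.pi * t / 2)) := by
  have hz : ((3 + Complex.I * t) / 2 : ℂ) = (1 + Complex.I * t) / 2 + 1 := by ring
  have hne : ((1 + Complex.I * t) / 2 : ℂ) ≠ 0 := by
    intro h
    rw [div_eq_zero_iff] at h
    rcases h with h | h
    · have := congrArg Complex.re h
      simp at this
    · norm_num at h
  rw [hz, Complex.Gamma_add_one _ hne, norm_mul]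
  congr 1
  · rw [norm_div, show (1 + Complex.I * ↑t : ℂ) = ((1:ℝ):ℂ) + (t:ℝ) * Complex.I by push_cast; ring,
      Complex.norm_add_mul_I]
    norm_num
  · rw [← abs_gamma_half_sq t, Real.sqrt_sq (norm_nonneg _)]

lemma sqrt_exp_half (y : ℝ) : Real.sqrt (Real.exp y) = Real.exp (y / 2) := by
  rw [show Real.exp y = Real.exp (y / 2) ^ 2 by rw [sq, ← Real.exp_add]; ring_nf,
    Real.sqrt_sq (Real.exp_pos _).le]

lemma G_le (t : ℝ) :
    Real.sqrt (Real.pi / Real.cosh (Real.pi * t / 2)) * Real.exp (Real.pi * t / 4)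
      ≤ Real.sqrt (2 * Real.pi) := by
  set x := Real.pi * t / 2 with hx
  have hc : 0 < Real.cosh x := Real.cosh_pos x
  have h4 : Real.pi * t / 4 = x / 2 := by rw [hx]; ring
  rw [h4, ← sqrt_exp_half, ← Real.sqrt_mul (by positivity)]
  apply Real.sqrt_le_sqrt
  rw [div_mul_eq_mul_div, div_le_iff₀ hc, Real.cosh_eq]
  nlinarith [Real.exp_pos (-x), Real.pi_pos, Real.exp_pos x]

lemma G_le' (t : ℝ) :
    Real.sqrt (Real.pi / Real.cosh (Real.pi * t / 2)) * Real.exp (Real.pi * t / 4)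
      ≤ Real.sqrt (2 * Real.pi) * Real.exp (Real.pi * t / 2) := by
  set x := Real.pi * t / 2 with hx
  have hc : 0 < Real.cosh x := Real.cosh_pos x
  have h4 : Real.pi * t / 4 = x / 2 := by rw [hx]; ring
  have hex : Real.exp x = Real.sqrt (Real.exp (2 * x)) := by
    rw [sqrt_exp_half]; ring_nf
  rw [h4, hex, ← sqrt_exp_half, ← Real.sqrt_mul (by positivity), ← Real.sqrt_mul (by positivity)]
  apply Real.sqrt_le_sqrt
  rw [div_mul_eq_mul_div, div_le_iff₀ hc, Real.cosh_eq]
  have e1 : Real.exp (2 * x) * Real.exp (-x) = Real.exp x := by rw [← Real.exp_add]; ring_nf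
  have e2 : Real.exp (2 * x) * Real.exp x = Real.exp (3 * x) := by rw [← Real.exp_add]; ring_nf
  nlinarith [Real.exp_pos (3 * x), Real.pi_pos, Real.exp_pos x]

lemma neg_mul_exp_le (t : ℝ) :
    (-t) * Real.exp (Real.pi * t / 2) ≤ 2 / (Real.exp 1 * Real.pi) := by
  have h1 := Real.add_one_le_exp (-(Real.pi * t / 2) - 1)
  have h2 : Real.exp (-(Real.pi * t / 2) - 1)
      = (Real.exp (Real.pi * t / 2) * Real.exp 1)⁻¹ := by
    rw [show -(Real.pi * t / 2) - 1 = -(Real.pi * t / 2 + 1) by ring, Real.exp_neg, Real.exp_add]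
  rw [h2] at h1
  rw [le_div_iff₀ (by positivity)]
  have hv : 0 < Real.exp (Real.pi * t / 2) * Real.exp 1 := by positivity
  have h4 : (-(Real.pi * t / 2)) * (Real.exp (Real.pi * t / 2) * Real.exp 1) ≤ 1 := by
    calc (-(Real.pi * t / 2)) * (Real.exp (Real.pi * t / 2) * Real.exp 1)
        ≤ (Real.exp (Real.pi * t / 2) * Real.exp 1)⁻¹ * (Real.exp (Real.pi * t / 2) * Real.exp 1) :=
          mul_le_mul_of_nonneg_right (by linarith) hv.le
      _ = 1 := inv_mul_cancel₀ hv.ne'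
  nlinarith [h4]

lemma integral_mul_exp_neg_mul_sq_real {b : ℝ} (hb : 0 < b) :
    ∫ r in Ioi (0:ℝ), r * Real.exp (-b * r ^ 2) = (2 * b)⁻¹ := by
  have h := integral_mul_cexp_neg_mul_sq (b := (b : ℂ)) (by simpa using hb)
  have heq : ∀ r : ℝ, (r : ℂ) * Complex.exp (-(b : ℂ) * (r : ℂ) ^ 2)
      = ((r * Real.exp (-b * r ^ 2) : ℝ) : ℂ) := by
    intro r; push_cast [Complex.ofReal_exp]; ring_nf
  simp_rw [heq] at h
  rw [show ∫ (r : ℝ) in Ioi 0, ((r * Real.exp (-b * r ^ 2) : ℝ) : ℂ)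
      = ((∫ (r : ℝ) in Ioi 0, r * Real.exp (-b * r ^ 2) : ℝ) : ℂ) from integral_ofReal] at h
  have hc : ((2 * b : ℝ)⁻¹ : ℂ) = (2 * (b:ℂ))⁻¹ := by push_cast; ring
  rw [← hc] at h
  exact_mod_cast h

lemma integral_max_mul_gauss {b : ℝ} (hb : 0 < b) :
    ∫ u : ℝ, max u 0 * Real.exp (-b * u ^ 2) = (2 * b)⁻¹ := by
  have heq : (fun u : ℝ => max u 0 * Real.exp (-b * u ^ 2))
      = Set.indicator (Ioi (0:ℝ)) (fun u => u * Real.exp (-b * u ^ 2)) := by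
    funext u
    rcases le_or_gt u 0 with h | h
    · rw [max_eq_right h, Set.indicator_of_notMem (by simpa using h)]
      ring
    · rw [max_eq_left h.le, Set.indicator_of_mem (by simpa using h)]
  rw [heq, integral_indicator measurableSet_Ioi, integral_mul_exp_neg_mul_sq_real hb]

lemma integrable_max_mul_gauss {b : ℝ} (hb : 0 < b) :
    Integrable fun u : ℝ => max u 0 * Real.exp (-b * u ^ 2) := by
  apply Integrable.mono' ((integrable_mul_exp_neg_mul_sq hb).abs)
  · exact ((continuous_id.max continuous_const).mul
      (Real.continuous_exp.comp (by continuity))).aestronglyMeasurable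
  · filter_upwards with u
    rw [Real.norm_eq_abs, abs_mul, abs_mul, _root_.abs_of_nonneg (Real.exp_pos _).le]
    have h1 : |max u 0| ≤ |u| := by
      rw [_root_.abs_of_nonneg (le_max_right u 0)]
      exact max_le (le_abs_self u) (abs_nonneg u)
    exact mul_le_mul_of_nonneg_right h1 (Real.exp_pos _).le

set_option maxHeartbeats 2000000 in
/-- Bound on the Gaussian-weighted Gamma integral: for `t₀ ≥ 0` and `h > 0`,
`P(t₀,h) = ∫ |Γ((3+it)/2)| e^{πt/4} e^{-(t-t₀)²/(2h²)} dt ≤ hπ(t₀ + h/√(2π) + 1 + 1/(2√2))`. -/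
theorem P_bound (t₀ h : ℝ) (ht₀ : 0 ≤ t₀) (hh : 0 < h) :
    (∫ t : ℝ, ‖Complex.Gamma ((3 + Complex.I * t) / 2)‖ *
        Real.exp (Real.pi * t / 4) * Real.exp (-(t - t₀) ^ 2 / (2 * h ^ 2))) ≤
      h * Real.pi * (t₀ + h / Real.sqrt (2 * Real.pi) + 1 + 1 / (2 * Real.sqrt 2)) := by
  have hπ := Real.pi_pos
  set b : ℝ := (2 * h ^ 2)⁻¹ with hbdef
  have hb : 0 < b := by positivity
  have hexp : ∀ t : ℝ, -(t - t₀) ^ 2 / (2 * h ^ 2) = -b * (t - t₀) ^ 2 := by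
    intro t; rw [hbdef]; field_simp
  set S : ℝ := Real.sqrt (Real.pi / 2) with hSdef
  have hS0 : 0 ≤ S := Real.sqrt_nonneg _
  have hs2 : Real.sqrt (2 * Real.pi) = 2 * S := by
    rw [hSdef, show (2:ℝ) * Real.pi = 2 ^ 2 * (Real.pi / 2) by ring,
      Real.sqrt_mul (by norm_num), Real.sqrt_sq (by norm_num)]
  set D : ℝ → ℝ := fun t =>
    (S * (1 + t₀)) * Real.exp (-b * (t - t₀) ^ 2)
      + S * (max (t - t₀) 0 * Real.exp (-b * (t - t₀) ^ 2))
      + (S * (2 / (Real.exp 1 * Real.pi))) * Real.exp (-b * t ^ 2) with hDdef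
  -- pointwise bound
  have hfD : ∀ t : ℝ,
      ‖Complex.Gamma ((3 + Complex.I * t) / 2)‖ *
        Real.exp (Real.pi * t / 4) * Real.exp (-(t - t₀) ^ 2 / (2 * h ^ 2)) ≤ D t := by
    intro t
    rw [hexp t, abs_gamma_three t]
    have hmax0 : (0:ℝ) ≤ max (t - t₀) 0 := le_max_right _ _
    rcases le_or_gt 0 t with ht | ht
    · have hA : Real.sqrt (1 + t ^ 2) ≤ 1 + t := by
        calc Real.sqrt (1 + t ^ 2) ≤ Real.sqrt ((1 + t) ^ 2) :=
              Real.sqrt_le_sqrt (by nlinarith)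
          _ = 1 + t := Real.sqrt_sq (by linarith)
      calc Real.sqrt (1 + t ^ 2) / 2 * Real.sqrt (Real.pi / Real.cosh (Real.pi * t / 2)) *
              Real.exp (Real.pi * t / 4) * Real.exp (-b * (t - t₀) ^ 2)
          = Real.sqrt (1 + t ^ 2) / 2 *
              (Real.sqrt (Real.pi / Real.cosh (Real.pi * t / 2)) * Real.exp (Real.pi * t / 4)) *
              Real.exp (-b * (t - t₀) ^ 2) := by ring
        _ ≤ (1 + t) / 2 * Real.sqrt (2 * Real.pi) * Real.exp (-b * (t - t₀) ^ 2) := by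
            gcongr
            exact G_le t
        _ = S * (1 + t) * Real.exp (-b * (t - t₀) ^ 2) := by rw [hs2]; ring
        _ ≤ S * (1 + t₀ + max (t - t₀) 0) * Real.exp (-b * (t - t₀) ^ 2) := by
            apply mul_le_mul_of_nonneg_right _ (Real.exp_pos _).le
            apply mul_le_mul_of_nonneg_left _ hS0
            have := le_max_left (t - t₀) 0
            linarith
        _ ≤ D t := by
            rw [hDdef]
            have : (0:ℝ) ≤ (S * (2 / (Real.exp 1 * Real.pi))) * Real.exp (-b * t ^ 2) := by
              positivity
            nlinarith [Real.exp_pos (-b * (t - t₀) ^ 2)]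
    · have hA : Real.sqrt (1 + t ^ 2) ≤ 1 + -t := by
        calc Real.sqrt (1 + t ^ 2) ≤ Real.sqrt ((1 + -t) ^ 2) :=
              Real.sqrt_le_sqrt (by nlinarith)
          _ = 1 + -t := Real.sqrt_sq (by linarith)
      have hA2 : Real.sqrt (1 + t ^ 2) / 2 ≤ (1 + -t) / 2 := by linarith
      have ht2 : t ^ 2 ≤ (t - t₀) ^ 2 := by nlinarith [mul_nonneg ht₀ (neg_nonneg.mpr ht.le)]
      have hEt : Real.exp (-b * (t - t₀) ^ 2) ≤ Real.exp (-b * t ^ 2) :=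
        Real.exp_le_exp.mpr (by nlinarith [mul_nonneg hb.le (sub_nonneg.mpr ht2)])
      have he1 : Real.exp (Real.pi * t / 2) ≤ 1 :=
        Real.exp_le_one_iff.mpr (by nlinarith)
      have hneg := neg_mul_exp_le t
      calc Real.sqrt (1 + t ^ 2) / 2 * Real.sqrt (Real.pi / Real.cosh (Real.pi * t / 2)) *
              Real.exp (Real.pi * t / 4) * Real.exp (-b * (t - t₀) ^ 2)
          = Real.sqrt (1 + t ^ 2) / 2 *
              (Real.sqrt (Real.pi / Real.cosh (Real.pi * t / 2)) * Real.exp (Real.pi * t / 4)) *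
              Real.exp (-b * (t - t₀) ^ 2) := by ring
        _ ≤ (1 + -t) / 2 * (Real.sqrt (2 * Real.pi) * Real.exp (Real.pi * t / 2)) *
              Real.exp (-b * (t - t₀) ^ 2) := by
            apply mul_le_mul_of_nonneg_right _ (Real.exp_pos _).le
            apply mul_le_mul hA2 (G_le' t) (by positivity) (by linarith)
        _ = S * Real.exp (Real.pi * t / 2) * Real.exp (-b * (t - t₀) ^ 2)
              + S * ((-t) * Real.exp (Real.pi * t / 2)) * Real.exp (-b * (t - t₀) ^ 2) := by
            rw [hs2]; ring
        _ ≤ S * 1 * Real.exp (-b * (t - t₀) ^ 2)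
              + S * (2 / (Real.exp 1 * Real.pi)) * Real.exp (-b * t ^ 2) := by
            apply add_le_add
            · gcongr
            · apply mul_le_mul _ hEt (Real.exp_pos _).le (by positivity)
              exact mul_le_mul_of_nonneg_left hneg hS0
        _ ≤ D t := by
            rw [hDdef]
            have h1 : S * 1 * Real.exp (-b * (t - t₀) ^ 2)
                ≤ (S * (1 + t₀)) * Real.exp (-b * (t - t₀) ^ 2) := by
              apply mul_le_mul_of_nonneg_right _ (Real.exp_pos _).le
              nlinarith
            have h2 : (0:ℝ) ≤ S * (max (t - t₀) 0 * Real.exp (-b * (t - t₀) ^ 2)) := by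
              positivity
            linarith
  -- nonnegativity
  have hf0 : ∀ t : ℝ, 0 ≤
      ‖Complex.Gamma ((3 + Complex.I * t) / 2)‖ *
        Real.exp (Real.pi * t / 4) * Real.exp (-(t - t₀) ^ 2 / (2 * h ^ 2)) := by
    intro t
    positivity
  -- integrability
  have hint1 : Integrable (fun t : ℝ => Real.exp (-b * (t - t₀) ^ 2)) :=
    (integrable_exp_neg_mul_sq hb).comp_sub_right t₀
  have hint2 : Integrable (fun t : ℝ => max (t - t₀) 0 * Real.exp (-b * (t - t₀) ^ 2)) :=
    (integrable_max_mul_gauss hb).comp_sub_right t₀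
  have hint3 : Integrable (fun t : ℝ => Real.exp (-b * t ^ 2)) := integrable_exp_neg_mul_sq hb
  have hDint : Integrable D := by
    rw [hDdef]
    exact ((hint1.const_mul _).add (hint2.const_mul _)).add (hint3.const_mul _)
  -- integrals
  have hgauss : Real.sqrt (Real.pi / b) = h * Real.sqrt (2 * Real.pi) := by
    rw [show Real.pi / b = h ^ 2 * (2 * Real.pi) by rw [hbdef]; field_simp,
      Real.sqrt_mul (sq_nonneg h), Real.sqrt_sq hh.le]
  have hI1 : ∫ t : ℝ, Real.exp (-b * (t - t₀) ^ 2) = h * Real.sqrt (2 * Real.pi) := by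
    rw [integral_sub_right_eq_self (fun u : ℝ => Real.exp (-b * u ^ 2)) t₀,
      integral_gaussian, hgauss]
  have hI2 : ∫ t : ℝ, max (t - t₀) 0 * Real.exp (-b * (t - t₀) ^ 2) = h ^ 2 := by
    rw [integral_sub_right_eq_self (fun u : ℝ => max u 0 * Real.exp (-b * u ^ 2)) t₀,
      integral_max_mul_gauss hb, hbdef]
    field_simp
  have hI3 : ∫ t : ℝ, Real.exp (-b * t ^ 2) = h * Real.sqrt (2 * Real.pi) := by
    rw [integral_gaussian, hgauss]
  have hDval : ∫ t : ℝ, D t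
      = (S * (1 + t₀)) * (h * Real.sqrt (2 * Real.pi)) + S * h ^ 2
        + (S * (2 / (Real.exp 1 * Real.pi))) * (h * Real.sqrt (2 * Real.pi)) := by
    have ha : Integrable (fun t : ℝ => (S * (1 + t₀)) * Real.exp (-b * (t - t₀) ^ 2)
        + S * (max (t - t₀) 0 * Real.exp (-b * (t - t₀) ^ 2))) :=
      (hint1.const_mul _).add (hint2.const_mul _)
    simp only [hDdef]
    rw [integral_add ha (hint3.const_mul _),
      integral_add (hint1.const_mul _) (hint2.const_mul _),
      integral_const_mul, integral_const_mul, integral_const_mul, hI1, hI2, hI3]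
  -- key algebraic identities
  have key1 : S * Real.sqrt (2 * Real.pi) = Real.pi := by
    rw [hSdef, ← Real.sqrt_mul (by positivity),
      show Real.pi / 2 * (2 * Real.pi) = Real.pi ^ 2 by ring, Real.sqrt_sq hπ.le]
  have hs2pos : 0 < Real.sqrt (2 * Real.pi) := Real.sqrt_pos.mpr (by positivity)
  have hdiv : h / Real.sqrt (2 * Real.pi) = h * S / Real.pi := by
    rw [div_eq_div_iff hs2pos.ne' hπ.ne']
    linear_combination (-h) * key1
  have h6 : (6:ℝ) ≤ Real.exp 1 * Real.pi := by
    nlinarith [Real.exp_one_gt_d9, Real.pi_gt_three]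
  have hrt2 : Real.sqrt 2 ≤ 1.5 := by
    nlinarith [Real.sq_sqrt (by norm_num : (0:ℝ) ≤ 2), Real.sqrt_nonneg 2]
  have elast : 2 * h / Real.exp 1 ≤ h * Real.pi / (2 * Real.sqrt 2) := by
    rw [div_le_div_iff₀ (Real.exp_pos 1) (by positivity)]
    nlinarith [hh.le, Real.sqrt_nonneg 2, Real.exp_pos 1, h6, hrt2]
  -- conclusion
  calc (∫ t : ℝ, ‖Complex.Gamma ((3 + Complex.I * t) / 2)‖ *
        Real.exp (Real.pi * t / 4) * Real.exp (-(t - t₀) ^ 2 / (2 * h ^ 2)))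
      ≤ ∫ t : ℝ, D t :=
        integral_mono_of_nonneg (Filter.Eventually.of_forall hf0) hDint
          (Filter.Eventually.of_forall hfD)
    _ = (S * (1 + t₀)) * (h * Real.sqrt (2 * Real.pi)) + S * h ^ 2
        + (S * (2 / (Real.exp 1 * Real.pi))) * (h * Real.sqrt (2 * Real.pi)) := hDval
    _ = h * Real.pi * (1 + t₀) + S * h ^ 2 + 2 * h / Real.exp 1 := by
        have e3 : (S * (2 / (Real.exp 1 * Real.pi))) * (h * Real.sqrt (2 * Real.pi))
            = 2 * h / Real.exp 1 := by
          rw [show (S * (2 / (Real.exp 1 * Real.pi))) * (h * Real.sqrt (2 * Real.pi))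
              = (S * Real.sqrt (2 * Real.pi)) * (2 * h / (Real.exp 1 * Real.pi)) by ring, key1]
          field_simp
        rw [e3]
        have e1 : (S * (1 + t₀)) * (h * Real.sqrt (2 * Real.pi))
            = h * Real.pi * (1 + t₀) := by
          rw [show (S * (1 + t₀)) * (h * Real.sqrt (2 * Real.pi))
              = (S * Real.sqrt (2 * Real.pi)) * (h * (1 + t₀)) by ring, key1]
          ring
        rw [e1]
    _ ≤ h * Real.pi * (1 + t₀) + S * h ^ 2 + h * Real.pi / (2 * Real.sqrt 2) := by
        linarith [elast]
    _ = h * Real.pi * (t₀ + h * S / Real.pi + 1 + 1 / (2 * Real.sqrt 2)) := by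
        field_simp
        ring
    _ = h * Real.pi * (t₀ + h / Real.sqrt (2 * Real.pi) + 1 + 1 / (2 * Real.sqrt 2)) := by
        rw [hdiv]
end
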